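/- There do not exist coprime positive integers a, b with both a² + b² and b² − a² perfect squares. -/

import Mathlib

lemma sq_pos_of_coprime' {a b c : ℤ} (h : IsCoprime a b) (heq : a * b = c ^ 2)
    (ha : 0 < a) : ∃ a0 : ℤ, 0 < a0 ∧ a = a0 ^ 2 := by
  obtain ⟨a0, h0 | h0⟩ := Int.sq_of_isCoprime h heq
  · refine ⟨|a0|, ?_, by rw [sq_abs]; exact h0⟩
    rcases eq_or_ne a0 0 with rfl | hne
    · simp at h0; omega
    · exact abs_pos.mpr hne
  · exfalso; nlinarith [sq_nonneg a0]

lemma descent_step_even (R P Q S : ℤ) (hR : 0 < R) (hP : 0 < P) (hQ : 0 < Q)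
    (hgcd : Int.gcd P Q = 1) (heq : P ^ 2 + Q ^ 2 = R ^ 2) (hsq : 2 * P * Q = S ^ 2)
    (hPe : P % 2 = 0) :
    ∃ R' P' Q' S' : ℤ, 0 < R' ∧ 0 < P' ∧ 0 < Q' ∧ Int.gcd P' Q' = 1 ∧
      P' ^ 2 + Q' ^ 2 = R' ^ 2 ∧ 2 * P' * Q' = S' ^ 2 ∧ R' < R := by
  have hco : IsCoprime P Q := Int.isCoprime_iff_gcd_eq_one.mpr hgcd
  have hQo : Q % 2 = 1 := by
    rcases Int.emod_two_eq Q with h | h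
    · exfalso
      have hu : IsUnit (2 : ℤ) :=
        hco.isUnit_of_dvd' (Int.dvd_of_emod_eq_zero hPe) (Int.dvd_of_emod_eq_zero h)
      rw [Int.isUnit_iff] at hu; omega
    · exact h
  have htriple : PythagoreanTriple Q P R := by
    unfold PythagoreanTriple; nlinarith [heq]
  obtain ⟨m, n, hQeq, hPeq, hReq, hmn, hpar, hm0⟩ :=
    htriple.coprime_classification' (by rwa [Int.gcd_comm]) hQo hR
  have hmn_pos : 0 < m * n := by nlinarith
  have hm : 0 < m := lt_of_le_of_ne hm0 (by rintro rfl; simp at hmn_pos)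
  have hn : 0 < n := by nlinarith
  have hmgtn : n < m := by nlinarith
  -- S is even
  have hS : (2:ℤ) ∣ S := Int.prime_two.dvd_of_dvd_pow (n := 2) ⟨P * Q, by linarith⟩
  obtain ⟨T, hT⟩ := hS
  have hTsq : m * (n * ((m - n) * (m + n))) = T ^ 2 := by
    rw [hPeq, hQeq, hT] at hsq
    have h4 : 4 * (m * (n * ((m - n) * (m + n)))) = 4 * T ^ 2 := by linear_combination hsq
    linarith
  -- coprimality facts
  have hcmn : IsCoprime m n := Int.isCoprime_iff_gcd_eq_one.mpr hmn
  have c_m_sub : IsCoprime m (m - n) := by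
    have := hcmn.neg_right.add_mul_right_right 1; convert this using 1; rfl; ring
  have c_m_add : IsCoprime m (m + n) := by
    have := hcmn.add_mul_right_right 1; convert this using 1; rfl; ring
  have c_n_sub : IsCoprime n (m - n) := by
    have := hcmn.symm.add_mul_right_right (-1); convert this using 1; rfl; ring
  have c_n_add : IsCoprime n (m + n) := by
    have := hcmn.symm.add_mul_right_right 1; convert this using 1; rfl; ring
  have hparity_sub : (m - n) % 2 = 1 := by rcases hpar with ⟨h1, h2⟩ | ⟨h1, h2⟩ <;> omega
  have hparity_add : (m + n) % 2 = 1 := by rcases hpar with ⟨h1, h2⟩ | ⟨h1, h2⟩ <;> omega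
  have c_sub_add : IsCoprime (m - n) (m + n) := by
    rw [Int.isCoprime_iff_gcd_eq_one]
    set g := Int.gcd (m - n) (m + n) with hgdef
    have hg1 : (g:ℤ) ∣ (m - n) := Int.gcd_dvd_left _ _
    have hg2 : (g:ℤ) ∣ (m + n) := Int.gcd_dvd_right _ _
    have hg2m : (g:ℤ) ∣ 2 * m := by have := dvd_add hg1 hg2; convert this using 1; rfl; ring
    have hg2n : (g:ℤ) ∣ 2 * n := by have := dvd_sub hg2 hg1; convert this using 1; rfl; ring
    have hgg : (g:ℤ) ∣ (Int.gcd (2*m) (2*n) : ℤ) := Int.dvd_coe_gcd hg2m hg2n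
    rw [Int.gcd_mul_left, hmn] at hgg
    have hgd2 : (g:ℤ) ∣ 2 := by simpa using hgg
    have : g ∣ 2 := by exact_mod_cast hgd2
    rcases (Nat.dvd_prime Nat.prime_two).mp this with h | h
    · exact h
    · exfalso; rw [h] at hg1; omega
  have hco1 : IsCoprime m (n * ((m - n) * (m + n))) :=
    hcmn.mul_right (c_m_sub.mul_right c_m_add)
  obtain ⟨w, hw, hwm⟩ := sq_pos_of_coprime' hco1 hTsq hm
  have hco2 : IsCoprime n (m * ((m - n) * (m + n))) :=
    hcmn.symm.mul_right (c_n_sub.mul_right c_n_add)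
  obtain ⟨x, hx, hxn⟩ := sq_pos_of_coprime' hco2 (by rw [← hTsq]; ring) hn
  have hco3 : IsCoprime (m - n) (m * (n * (m + n))) :=
    c_m_sub.symm.mul_right (c_n_sub.symm.mul_right c_sub_add)
  obtain ⟨y, hy, hysub⟩ := sq_pos_of_coprime' hco3 (by rw [← hTsq]; ring) (by linarith)
  have hco4 : IsCoprime (m + n) (m * (n * (m - n))) :=
    c_m_add.symm.mul_right (c_n_add.symm.mul_right c_sub_add.symm)
  obtain ⟨z, hz, hzadd⟩ := sq_pos_of_coprime' hco4 (by rw [← hTsq]; ring) (by linarith)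
  -- z, y odd
  have hzo : z % 2 = 1 := by
    rcases Int.emod_two_eq z with h | h
    · exfalso
      obtain ⟨k, hk⟩ := Int.dvd_of_emod_eq_zero h
      have h2 : (2:ℤ) ∣ (m + n) := ⟨2 * k ^ 2, by rw [hzadd, hk]; ring⟩
      omega
    · exact h
  have hyo : y % 2 = 1 := by
    rcases Int.emod_two_eq y with h | h
    · exfalso
      obtain ⟨k, hk⟩ := Int.dvd_of_emod_eq_zero h
      have h2 : (2:ℤ) ∣ (m - n) := ⟨2 * k ^ 2, by rw [hysub, hk]; ring⟩
      omega
    · exact h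
  have hzgty : y < z := by
    by_contra hle
    push_neg at hle
    have h1 : z ^ 2 ≤ y ^ 2 := pow_le_pow_left₀ hz.le hle 2
    rw [← hzadd, ← hysub] at h1
    linarith
  -- gcd z y = 1
  have hgzy : Int.gcd z y = 1 := by
    set g := Int.gcd z y with hgdef
    have hg1 : (g:ℤ) ∣ z := Int.gcd_dvd_left _ _
    have hg2 : (g:ℤ) ∣ y := Int.gcd_dvd_right _ _
    have hg2m : (g:ℤ) ∣ 2 * m := by
      have := dvd_add (dvd_pow hg1 two_ne_zero) (dvd_pow hg2 two_ne_zero)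
      rw [← hzadd, ← hysub] at this
      convert this using 1; rfl; ring
    have hg2n : (g:ℤ) ∣ 2 * n := by
      have := dvd_sub (dvd_pow hg1 two_ne_zero) (dvd_pow hg2 two_ne_zero)
      rw [← hzadd, ← hysub] at this
      convert this using 1; rfl; ring
    have hgg : (g:ℤ) ∣ (Int.gcd (2*m) (2*n) : ℤ) := Int.dvd_coe_gcd hg2m hg2n
    rw [Int.gcd_mul_left, hmn] at hgg
    have hgd2 : (g:ℤ) ∣ 2 := by simpa using hgg
    have hgd2' : g ∣ 2 := by exact_mod_cast hgd2
    rcases (Nat.dvd_prime Nat.prime_two).mp hgd2' with h | h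
    · exact h
    · exfalso; rw [h] at hg1; omega
  -- define U, V
  have hUe : (2:ℤ) ∣ z + y := by omega
  have hVe : (2:ℤ) ∣ z - y := by omega
  obtain ⟨U, hU⟩ := hUe
  obtain ⟨V, hV⟩ := hVe
  have hUpos : 0 < U := by omega
  have hVpos : 0 < V := by omega
  have e1 : (z + y) ^ 2 = 4 * U ^ 2 := by rw [hU]; ring
  have e2 : (z - y) ^ 2 = 4 * V ^ 2 := by rw [hV]; ring
  have e3 : (z + y) * (z - y) = 4 * (U * V) := by rw [hU, hV]; ring
  have hUV : U ^ 2 + V ^ 2 = w ^ 2 := by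
    have h4 : 4 * U ^ 2 + 4 * V ^ 2 = 4 * w ^ 2 := by
      linear_combination (-1) * e1 + (-1) * e2 + (-2) * hzadd + (-2) * hysub + 4 * hwm
    linarith
  have h2UV : 2 * U * V = x ^ 2 := by
    have h4 : 4 * (2 * U * V) = 4 * x ^ 2 := by
      linear_combination (-2) * e3 + (-2) * hzadd + 2 * hysub + 4 * hxn
    linarith
  have hgUV : Int.gcd U V = 1 := by
    set g := Int.gcd U V with hgdef
    have hg1 : (g:ℤ) ∣ U := Int.gcd_dvd_left _ _
    have hg2 : (g:ℤ) ∣ V := Int.gcd_dvd_right _ _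
    have hgz : (g:ℤ) ∣ z := by have := dvd_add hg1 hg2; convert this using 1; rfl; omega
    have hgy : (g:ℤ) ∣ y := by have := dvd_sub hg1 hg2; convert this using 1; rfl; omega
    have hgg : (g:ℤ) ∣ (Int.gcd z y : ℤ) := Int.dvd_coe_gcd hgz hgy
    rw [hgzy] at hgg
    have : g ∣ 1 := by exact_mod_cast hgg
    simpa using this
  have hwlt : w < R := by
    have hw2 : w ≤ w ^ 2 := le_self_pow₀ (by linarith) two_ne_zero
    have hm2 : m ≤ m ^ 2 := le_self_pow₀ (by linarith) two_ne_zero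
    have hn2 : 0 < n ^ 2 := pow_pos hn 2
    linarith [hwm, hReq]
  exact ⟨w, U, V, x, hw, hUpos, hVpos, hgUV, hUV, h2UV, hwlt⟩

lemma no_sol : ∀ n : ℕ, ∀ R P Q S : ℤ, R.natAbs = n → 0 < R → 0 < P → 0 < Q →
    Int.gcd P Q = 1 → P ^ 2 + Q ^ 2 = R ^ 2 → 2 * P * Q = S ^ 2 → False := by
  intro n
  induction n using Nat.strong_induction_on with
  | _ n ih =>
    intro R P Q S hn hR hP hQ hgcd heq hsq
    have heven : P % 2 = 0 ∨ Q % 2 = 0 := by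
      by_contra hcon
      push_neg at hcon
      have hP2 : P % 2 = 1 := by
        rcases Int.emod_two_eq P with h | h
        · exact absurd h hcon.1
        · exact h
      have hQ2 : Q % 2 = 1 := by
        rcases Int.emod_two_eq Q with h | h
        · exact absurd h hcon.2
        · exact h
      have hSe : (2:ℤ) ∣ S := Int.prime_two.dvd_of_dvd_pow (n := 2) ⟨P * Q, by linarith⟩
      obtain ⟨T, hT⟩ := hSe
      have hPQ : P * Q % 2 = 1 :=
        Int.odd_iff.mp ((Int.odd_iff.mpr hP2).mul (Int.odd_iff.mpr hQ2))
      have h2 : P * Q = 2 * T ^ 2 := by rw [hT] at hsq; linarith [sq_nonneg T, hsq]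
      omega
    have hstep : ∃ R' P' Q' S' : ℤ, 0 < R' ∧ 0 < P' ∧ 0 < Q' ∧ Int.gcd P' Q' = 1 ∧
        P' ^ 2 + Q' ^ 2 = R' ^ 2 ∧ 2 * P' * Q' = S' ^ 2 ∧ R' < R := by
      rcases heven with hPe | hQe
      · exact descent_step_even R P Q S hR hP hQ hgcd heq hsq hPe
      · exact descent_step_even R Q P S hR hQ hP (by rwa [Int.gcd_comm]) (by linarith)
          (by linear_combination hsq) hQe
    obtain ⟨R', P', Q', S', h1, h2, h3, h4, h5, h6, h7⟩ := hstep
    exact ih R'.natAbs (by omega) R' P' Q' S' rfl h1 h2 h3 h4 h5 h6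

theorem stmt_15 :
    ¬ ∃ a b : ℤ, 0 < a ∧ a < b ∧ Int.gcd a b = 1 ∧
      (∃ c : ℤ, a ^ 2 + b ^ 2 = c ^ 2) ∧ (∃ d : ℤ, b ^ 2 - a ^ 2 = d ^ 2) := by
  rintro ⟨a, b, ha, hab, hgcd, ⟨c, hc⟩, ⟨d, hd⟩⟩
  -- replace c, d by their absolute values
  wlog hc0 : 0 ≤ c generalizing c
  · exact this (-c) (by rw [hc]; ring) (by linarith)
  wlog hd0 : 0 ≤ d generalizing d
  · exact this (-d) (by rw [hd]; ring) (by linarith)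
  have hb : 0 < b := by linarith
  have hdpos : 0 < d := by
    rcases lt_or_eq_of_le hd0 with h | h
    · exact h
    · exfalso; rw [← h] at hd; nlinarith
  have hcpos : 0 < c := by
    rcases lt_or_eq_of_le hc0 with h | h
    · exact h
    · exfalso; rw [← h] at hc; nlinarith
  have hcd : d < c := by
    by_contra hle
    push_neg at hle
    have : c ^ 2 ≤ d ^ 2 := pow_le_pow_left₀ hcpos.le hle 2
    nlinarith
  have hcoab : IsCoprime a b := Int.isCoprime_iff_gcd_eq_one.mpr hgcd
  -- c and d are both odd
  have hodd : c % 2 = 1 ∧ d % 2 = 1 := by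
    have hsum : c ^ 2 + d ^ 2 = 2 * b ^ 2 := by linarith
    have hdiff : c ^ 2 - d ^ 2 = 2 * a ^ 2 := by linarith
    rcases Int.even_or_odd c with hce | hco
    · rcases Int.even_or_odd d with hde | hdo
      · exfalso
        obtain ⟨k, hk⟩ := hce
        obtain ⟨l, hl⟩ := hde
        have h4s : 2 * b ^ 2 = 4 * (k ^ 2 + l ^ 2) := by rw [← hsum, hk, hl]; ring
        have h4d : 2 * a ^ 2 = 4 * (k ^ 2 - l ^ 2) := by rw [← hdiff, hk, hl]; ring
        have hb2 : (2:ℤ) ∣ b := Int.prime_two.dvd_of_dvd_pow (n := 2) ⟨k^2+l^2, by linarith⟩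
        have ha2 : (2:ℤ) ∣ a := Int.prime_two.dvd_of_dvd_pow (n := 2) ⟨k^2-l^2, by linarith⟩
        have := hcoab.isUnit_of_dvd' ha2 hb2
        rw [Int.isUnit_iff] at this; omega
      · exfalso
        obtain ⟨k, hk⟩ := hce
        have hdd : (2:ℤ) ∣ d := Int.prime_two.dvd_of_dvd_pow (n := 2)
          ⟨b ^ 2 - 2 * k ^ 2, by rw [hk] at hsum; linarith⟩
        rw [Int.odd_iff] at hdo; omega
    · rcases Int.even_or_odd d with hde | hdo
      · exfalso
        obtain ⟨k, hk⟩ := hde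
        have hcc : (2:ℤ) ∣ c := Int.prime_two.dvd_of_dvd_pow (n := 2)
          ⟨b ^ 2 - 2 * k ^ 2, by rw [hk] at hsum; linarith⟩
        rw [Int.odd_iff] at hco; omega
      · exact ⟨Int.odd_iff.mp hco, Int.odd_iff.mp hdo⟩
  obtain ⟨hco2, hdo2⟩ := hodd
  obtain ⟨P, hP⟩ : (2:ℤ) ∣ c + d := by omega
  obtain ⟨Q, hQ⟩ : (2:ℤ) ∣ c - d := by omega
  have hPpos : 0 < P := by omega
  have hQpos : 0 < Q := by omega
  have e1 : (c + d) ^ 2 = 4 * P ^ 2 := by rw [hP]; ring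
  have e2 : (c - d) ^ 2 = 4 * Q ^ 2 := by rw [hQ]; ring
  have e3 : (c + d) * (c - d) = 4 * (P * Q) := by rw [hP, hQ]; ring
  have hPQR : P ^ 2 + Q ^ 2 = b ^ 2 := by
    have h4 : 4 * P ^ 2 + 4 * Q ^ 2 = 4 * b ^ 2 := by
      linear_combination (-1) * e1 + (-1) * e2 + (-2) * hc + (-2) * hd
    linarith
  have hPQS : 2 * P * Q = a ^ 2 := by
    have h4 : 4 * (2 * P * Q) = 4 * a ^ 2 := by
      linear_combination (-2) * e3 + (-2) * hc + 2 * hd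
    linarith
  have hgPQ : Int.gcd P Q = 1 := by
    set g := Int.gcd P Q with hgdef
    have hg1 : (g:ℤ) ∣ P := Int.gcd_dvd_left _ _
    have hg2 : (g:ℤ) ∣ Q := Int.gcd_dvd_right _ _
    have hgc : (g:ℤ) ∣ c := by have := dvd_add hg1 hg2; convert this using 1; rfl; omega
    have hgd : (g:ℤ) ∣ d := by have := dvd_sub hg1 hg2; convert this using 1; rfl; omega
    have hgb : (g:ℤ) ∣ 2 * b ^ 2 := by
      have := dvd_add (dvd_pow hgc two_ne_zero) (dvd_pow hgd two_ne_zero)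
      convert this using 1; rfl; linarith
    have hga : (g:ℤ) ∣ 2 * a ^ 2 := by
      have := dvd_sub (dvd_pow hgc two_ne_zero) (dvd_pow hgd two_ne_zero)
      convert this using 1; rfl; linarith
    have hcosq : IsCoprime (a ^ 2) (b ^ 2) := hcoab.pow
    obtain ⟨u, v, huv⟩ := hcosq
    have hg2' : (g:ℤ) ∣ 2 := by
      have : (2:ℤ) = u * (2 * a ^ 2) + v * (2 * b ^ 2) := by linarith [huv]
      rw [this]
      exact dvd_add (Dvd.dvd.mul_left hga u) (Dvd.dvd.mul_left hgb v)
    have hg2n : g ∣ 2 := by exact_mod_cast hg2'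
    rcases (Nat.dvd_prime Nat.prime_two).mp hg2n with h | h
    · exact h
    · exfalso; rw [h] at hgc; omega
  exact no_sol b.natAbs b P Q a rfl hb hPpos hQpos hgPQ hPQR hPQS
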